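/- (Leverage scores after splitting) Let G be a weighted graph and e an edge. (a) If lev_G(e) ≤ 1/2 and e is replaced by a path of two edges e1, e2 each of resistance r_e/2, then lev(e_i) = (1/2) lev_G(e) + 1/2 ∈ [1/2, 3/4] for i = 1,2 in the new graph. (b) If lev_G(e) ≥ 1/2 and e is replaced by two parallel edges e1, e2 each of resistance 2 r_e, then lev(e_i) = (1/2) lev_G(e) ∈ [1/4, 1/2] for i = 1,2 in the new graph. In particular, in both cases each copy has leverage score in [1/4, 3/4]. -/

import Mathlib

open Matrix

/-- The signed indicator vector `χ_x - χ_y`. -/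
def incv {V : Type*} [DecidableEq V] (x y : V) : V → ℝ := fun v =>
  (if v = x then 1 else 0) - (if v = y then 1 else 0)

/-- Weighted Laplacian of the multigraph whose edge `e` has endpoints `a e`, `b e`
and conductance `c e`. -/
noncomputable def lapM {V E : Type*} [DecidableEq V] [Fintype E]
    (a b : E → V) (c : E → ℝ) : Matrix V V ℝ :=
  ∑ e, c e • Matrix.vecMulVec (incv (a e) (b e)) (incv (a e) (b e))

/-- `M` is the Moore–Penrose pseudoinverse of `L`. -/
def IsMPInv {V : Type*} [Fintype V] (L M : Matrix V V ℝ) : Prop :=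
  L * M * L = L ∧ M * L * M = M ∧ (L * M)ᵀ = L * M ∧ (M * L)ᵀ = M * L

/-- Connectivity of a weighted graph, encoded as: the kernel of its Laplacian
consists exactly of the constant vectors. -/
def LapConnected {V : Type*} [Fintype V] (L : Matrix V V ℝ) : Prop :=
  ∀ x : V → ℝ, L.mulVec x = 0 → ∃ t : ℝ, ∀ v, x v = t

/-- Leverage score of edge `e` (resistance version): `b_eᵀ L⁺ b_e / r_e`. -/
noncomputable def levOf {V E : Type*} [Fintype V] [DecidableEq V]
    (a b : E → V) (r : E → ℝ) (Lp : Matrix V V ℝ) (e : E) : ℝ :=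
  (incv (a e) (b e) ⬝ᵥ Lp.mulVec (incv (a e) (b e))) / r e

/-- Endpoint map of the graph obtained by splitting edge `e` in series:
first copy goes from `a e` to a new midpoint. -/
def seriesA {V E : Type*} (a : E → V) : E ⊕ Unit → V ⊕ Unit
  | .inl e' => .inl (a e')
  | .inr _ => .inr ()

def seriesB {V E : Type*} [DecidableEq E] (b : E → V) (e : E) : E ⊕ Unit → V ⊕ Unit
  | .inl e' => if e' = e then .inr () else .inl (b e')
  | .inr _ => .inl (b e)

/-- Resistances after splitting `e` in series: both copies get `r e / 2`. -/
noncomputable def seriesR {E : Type*} [DecidableEq E] (r : E → ℝ) (e : E) : E ⊕ Unit → ℝ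
  | .inl e' => if e' = e then r e / 2 else r e'
  | .inr _ => r e / 2

/-- Endpoint maps after splitting `e` in parallel. -/
def parA {V E : Type*} (a : E → V) (e : E) : E ⊕ Unit → V
  | .inl e' => a e'
  | .inr _ => a e

def parB {V E : Type*} (b : E → V) (e : E) : E ⊕ Unit → V
  | .inl e' => b e'
  | .inr _ => b e

/-- Resistances after splitting `e` in parallel: both copies get `2 r e`. -/
noncomputable def parR {E : Type*} [DecidableEq E] (r : E → ℝ) (e : E) : E ⊕ Unit → ℝ
  | .inl e' => if e' = e then 2 * r e else r e'
  | .inr _ => 2 * r e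

/-! ### Auxiliary lemmas -/

set_option linter.unusedSectionVars false

section alg
variable {n : Type*} [Fintype n]

lemma quad_of_pinv (L S : Matrix n n ℝ) (hsym : Lᵀ = L)
    (hLSL : L * S * L = L) (φ w : n → ℝ) (hφ : L.mulVec φ = w) :
    w ⬝ᵥ S.mulVec w = φ ⬝ᵥ w := by
  have h1 : L.mulVec φ = vecMul φ L := by
    conv_lhs => rw [← hsym, Matrix.mulVec_transpose]
  calc w ⬝ᵥ S.mulVec w = vecMul φ L ⬝ᵥ (S * L).mulVec φ := by
        rw [← hφ, Matrix.mulVec_mulVec, h1]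
    _ = φ ⬝ᵥ (L * (S * L)).mulVec φ := by
        rw [← Matrix.dotProduct_mulVec, Matrix.mulVec_mulVec]
    _ = φ ⬝ᵥ w := by rw [← Matrix.mul_assoc, hLSL, hφ]

lemma mulVec_pinv_of_sum_zero (L Lp : Matrix n n ℝ) (hsym : Lᵀ = L)
    (h1 : L.mulVec (fun _ => 1) = 0)
    (hLSL : L * Lp * L = L) (hLS : (L * Lp)ᵀ = L * Lp)
    (hconn : ∀ x : n → ℝ, L.mulVec x = 0 → ∃ t : ℝ, ∀ v, x v = t)
    (w : n → ℝ) (hw : ∑ v, w v = 0) :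
    L.mulVec (Lp.mulVec w) = w := by
  have hLLLp : L * (L * Lp) = L := by
    have h2 : L * Lpᵀ * L = L := by
      have := congrArg Matrix.transpose hLSL
      simpa [Matrix.transpose_mul, hsym, Matrix.mul_assoc] using this
    calc L * (L * Lp) = L * (L * Lp)ᵀ := by rw [hLS]
      _ = L * Lpᵀ * L := by rw [Matrix.transpose_mul, hsym, Matrix.mul_assoc]
      _ = L := h2
  have key : ∀ u : n → ℝ, L.mulVec (L.mulVec (Lp.mulVec u)) = L.mulVec u := by
    intro u
    rw [Matrix.mulVec_mulVec, Matrix.mulVec_mulVec, Matrix.mul_assoc, hLLLp]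
  set x : n → ℝ := w - L.mulVec (Lp.mulVec w) with hx
  have hLx : L.mulVec x = 0 := by
    rw [hx, Matrix.mulVec_sub, key, sub_self]
  obtain ⟨t, ht⟩ := hconn x hLx
  have hsx : ∑ v, x v = 0 := by
    have hvm : vecMul (fun _ => (1:ℝ)) L = 0 := by
      rw [← Matrix.mulVec_transpose, hsym]; exact h1
    have h3 : ∑ v, ((L * Lp).mulVec w) v = 0 := by
      have : (fun _ => (1:ℝ)) ⬝ᵥ (L * Lp).mulVec w = 0 := by
        rw [Matrix.dotProduct_mulVec, ← Matrix.vecMul_vecMul, hvm, Matrix.zero_vecMul]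
        simp
      simpa [dotProduct] using this
    simp [hx, Finset.sum_sub_distrib, hw, Matrix.mulVec_mulVec, h3]
  have hx0 : ∀ v, x v = 0 := by
    intro v
    rcases isEmpty_or_nonempty n with h | h
    · exact isEmptyElim v
    · have hct : (Fintype.card n : ℝ) * t = 0 := by
        rw [← hsx]; simp [ht, Finset.sum_const, mul_comm]
      have hc : (Fintype.card n : ℝ) ≠ 0 := by
        simp [Fintype.card_ne_zero]
      rw [ht v]
      rcases mul_eq_zero.mp hct with h' | h'
      · exact absurd h' hc
      · exact h'
  funext v
  have h := hx0 v
  rw [hx] at h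
  simp only [Pi.sub_apply] at h
  linarith
end alg

section helpers
variable {V E : Type*} [Fintype V] [DecidableEq V] [Fintype E] [DecidableEq E]

lemma incv_dot (x y : V) (z : V → ℝ) : incv x y ⬝ᵥ z = z x - z y := by
  simp [incv, dotProduct, sub_mul, Finset.sum_sub_distrib, ite_mul]

lemma dot_incv (x y : V) (z : V → ℝ) : z ⬝ᵥ incv x y = z x - z y := by
  simp [incv, dotProduct, mul_sub, Finset.sum_sub_distrib, mul_ite]

lemma sum_incv (x y : V) : ∑ v, incv x y v = 0 := by
  simp [incv, Finset.sum_sub_distrib]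

lemma lapM_mulVec (a b : E → V) (c : E → ℝ) (x : V → ℝ) (v : V) :
    (lapM a b c).mulVec x v = ∑ e, c e * (x (a e) - x (b e)) * incv (a e) (b e) v := by
  simp only [lapM, mulVec, dotProduct, Matrix.sum_apply,
    Matrix.smul_apply, Matrix.vecMulVec_apply, smul_eq_mul]
  simp only [Finset.sum_mul]
  rw [Finset.sum_comm]
  refine Finset.sum_congr rfl fun e _ => ?_
  rw [← incv_dot (a e) (b e) x]
  simp only [dotProduct, Finset.mul_sum]
  rw [Finset.sum_mul]
  refine Finset.sum_congr rfl fun j _ => by ring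

lemma vecMulVec_transpose' (u v : V → ℝ) : (vecMulVec u v)ᵀ = vecMulVec v u := by
  ext i j; simp [vecMulVec_apply, mul_comm]

lemma lapM_transpose (a b : E → V) (c : E → ℝ) : (lapM a b c)ᵀ = lapM a b c := by
  simp [lapM, Matrix.transpose_sum, Matrix.transpose_smul, vecMulVec_transpose']

lemma lapM_mulVec_one (a b : E → V) (c : E → ℝ) :
    (lapM a b c).mulVec (fun _ => 1) = 0 := by
  funext v
  simp [lapM_mulVec]

lemma lapM_quad (a b : E → V) (c : E → ℝ) (x : V → ℝ) :
    (lapM a b c).mulVec x ⬝ᵥ x = ∑ e, c e * (x (a e) - x (b e))^2 := by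
  simp only [dotProduct, lapM_mulVec]
  simp only [Finset.sum_mul]
  rw [Finset.sum_comm]
  refine Finset.sum_congr rfl fun e _ => ?_
  have : ∑ v, c e * (x (a e) - x (b e)) * incv (a e) (b e) v * x v
      = c e * (x (a e) - x (b e)) * (incv (a e) (b e) ⬝ᵥ x) := by
    simp only [dotProduct, Finset.mul_sum]
    refine Finset.sum_congr rfl fun j _ => by ring
  rw [this, incv_dot]
  ring

lemma sum_eq_sum_add {α M : Type*} [Fintype α] [DecidableEq α] [AddCommGroup M]
    (f g : α → M) (e : α) (h : ∀ x, x ≠ e → f x = g x) :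
    ∑ x, f x = (∑ x, g x) + (f e - g e) := by
  rw [← Finset.add_sum_erase _ f (Finset.mem_univ e),
      ← Finset.add_sum_erase _ g (Finset.mem_univ e),
      Finset.sum_congr rfl (fun x hx => h x (Finset.ne_of_mem_erase hx))]
  abel

lemma incv_inl_inl (x y u : V) :
    incv (Sum.inl x : V ⊕ Unit) (Sum.inl y) (Sum.inl u) = incv x y u := by
  simp [incv]

lemma incv_inl_inl_inr (x y : V) (t : Unit) :
    incv (Sum.inl x : V ⊕ Unit) (Sum.inl y) (Sum.inr t) = 0 := by
  simp [incv]

lemma lapM_par (a b : E → V) (r : E → ℝ) (hr : ∀ e', 0 < r e') (e : E) :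
    lapM (parA a e) (parB b e) (fun x => (parR r e x)⁻¹) = lapM a b (fun e' => (r e')⁻¹) := by
  unfold lapM
  rw [Fintype.sum_sum_type]
  set M := vecMulVec (incv (a e) (b e)) (incv (a e) (b e)) with hM
  have h1 : ∑ e' : E, (parR r e (Sum.inl e'))⁻¹ •
      vecMulVec (incv (parA a e (Sum.inl e')) (parB b e (Sum.inl e')))
        (incv (parA a e (Sum.inl e')) (parB b e (Sum.inl e')))
    = (∑ e' : E, (r e')⁻¹ • vecMulVec (incv (a e') (b e')) (incv (a e') (b e')))
      + ((2 * r e)⁻¹ • M - (r e)⁻¹ • M) := by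
    rw [sum_eq_sum_add _ (fun e' => (r e')⁻¹ • vecMulVec (incv (a e') (b e')) (incv (a e') (b e'))) e]
    · simp [parA, parB, parR, hM]
    · intro x hx
      simp [parA, parB, parR, hx]
  have h2 : ∑ _x : Unit, (parR r e (Sum.inr _x))⁻¹ •
      vecMulVec (incv (parA a e (Sum.inr _x)) (parB b e (Sum.inr _x)))
        (incv (parA a e (Sum.inr _x)) (parB b e (Sum.inr _x)))
    = (2 * r e)⁻¹ • M := by
    simp [parA, parB, parR, hM]
  rw [h1, h2]
  have hre := (hr e).ne'
  have hz : (2 * r e)⁻¹ • M - (r e)⁻¹ • M + (2 * r e)⁻¹ • M = 0 := by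
    rw [← sub_smul, ← add_smul, show (2 * r e)⁻¹ - (r e)⁻¹ + (2 * r e)⁻¹ = 0 by
      field_simp; ring]
    exact zero_smul _ _
  rw [add_assoc, hz, add_zero]

set_option maxHeartbeats 1000000 in
lemma series_solve (a b : E → V) (r : E → ℝ) (hr : ∀ e', 0 < r e') (e : E)
    (ψ : V → ℝ)
    (hψ : ∀ u, ∑ e', (r e')⁻¹ * (ψ (a e') - ψ (b e')) * incv (a e') (b e') u
        = incv (a e) (b e) u) (s : ℝ) :
    (lapM (seriesA a) (seriesB b e) fun x => (seriesR r e x)⁻¹).mulVec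
      (Sum.elim (fun v => ψ v / 2) (fun _ => (ψ (a e) + ψ (b e)) / 4 - s * r e / 4))
    = fun v => (s+1)/2 * incv (Sum.inl (a e)) (Sum.inr ()) v
        + (1-s)/2 * incv (Sum.inr ()) (Sum.inl (b e)) v := by
  have hre := (hr e).ne'
  funext v
  rw [lapM_mulVec, Fintype.sum_sum_type]
  cases v with
  | inr t =>
    rw [sum_eq_sum_add _ (fun _ => (0:ℝ)) e (by
      intro x hx
      simp [seriesA, seriesB, seriesR, hx, incv_inl_inl_inr])]
    simp only [seriesA, seriesB, seriesR, if_pos rfl, ↓reduceIte, Sum.elim_inl, Sum.elim_inr,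
      Finset.sum_const_zero, Finset.univ_unique, Finset.sum_singleton]
    simp only [incv, Sum.inr.injEq, Sum.inl.injEq, reduceCtorEq, if_false,
      eq_iff_true_of_subsingleton, if_true]
    field_simp
    ring
  | inl u =>
    rw [sum_eq_sum_add _
      (fun e' => (1/2) * ((r e')⁻¹ * (ψ (a e') - ψ (b e')) * incv (a e') (b e') u)) e
      (by
        intro x hx
        simp only [seriesA, seriesB, seriesR, if_neg hx, Sum.elim_inl, incv_inl_inl]
        ring)]
    rw [← Finset.mul_sum, hψ u]
    simp only [seriesA, seriesB, seriesR, if_pos rfl, ↓reduceIte, Sum.elim_inl, Sum.elim_inr,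
      Finset.univ_unique, Finset.sum_singleton]
    simp only [incv, Sum.inl.injEq, reduceCtorEq, if_false]
    split_ifs <;> (try exact (by assumption : False).elim) <;> field_simp <;> ring

end helpers

/-- **Leverage scores after splitting.**  Splitting an edge of leverage score
`≤ 1/2` in series gives two copies of leverage score `lev/2 + 1/2 ∈ [1/2,3/4]`;
splitting an edge of leverage score `≥ 1/2` in parallel gives two copies of
leverage score `lev/2 ∈ [1/4,1/2]`. -/
theorem leverage_after_splitting
    {V E : Type*} [Fintype V] [DecidableEq V] [Fintype E] [DecidableEq E]
    (a b : E → V) (r : E → ℝ) (hr : ∀ e', 0 < r e') (e : E)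
    (hconn : LapConnected (lapM a b fun e' => (r e')⁻¹))
    (Lp : Matrix V V ℝ) (hLp : IsMPInv (lapM a b fun e' => (r e')⁻¹) Lp)
    (LpS : Matrix (V ⊕ Unit) (V ⊕ Unit) ℝ)
    (hLpS : IsMPInv (lapM (seriesA a) (seriesB b e) fun x => (seriesR r e x)⁻¹) LpS)
    (LpP : Matrix V V ℝ)
    (hLpP : IsMPInv (lapM (parA a e) (parB b e) fun x => (parR r e x)⁻¹) LpP) :
    (levOf a b r Lp e ≤ 1/2 →
      levOf (seriesA a) (seriesB b e) (seriesR r e) LpS (Sum.inl e)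
          = levOf a b r Lp e / 2 + 1/2
        ∧ levOf (seriesA a) (seriesB b e) (seriesR r e) LpS (Sum.inr ())
          = levOf a b r Lp e / 2 + 1/2
        ∧ levOf a b r Lp e / 2 + 1/2 ∈ Set.Icc (1/2 : ℝ) (3/4))
    ∧ (1/2 ≤ levOf a b r Lp e →
      levOf (parA a e) (parB b e) (parR r e) LpP (Sum.inl e)
          = levOf a b r Lp e / 2
        ∧ levOf (parA a e) (parB b e) (parR r e) LpP (Sum.inr ())
          = levOf a b r Lp e / 2
        ∧ levOf a b r Lp e / 2 ∈ Set.Icc (1/4 : ℝ) (1/2)) := by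
  classical
  have hre := (hr e).ne'
  set L : Matrix V V ℝ := lapM a b fun e' => (r e')⁻¹ with hLdef
  set w : V → ℝ := incv (a e) (b e) with hwdef
  set ψ : V → ℝ := Lp.mulVec w with hψdef
  have hsym : Lᵀ = L := lapM_transpose a b _
  have h1 : L.mulVec (fun _ => 1) = 0 := lapM_mulVec_one a b _
  have hψ : L.mulVec ψ = w :=
    mulVec_pinv_of_sum_zero L Lp hsym h1 hLp.1 hLp.2.2.1 hconn w (sum_incv _ _)
  have hψ' : ∀ u, ∑ e', (r e')⁻¹ * (ψ (a e') - ψ (b e')) * incv (a e') (b e') u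
      = incv (a e) (b e) u := by
    intro u
    have h := congrFun hψ u
    rw [hLdef, lapM_mulVec] at h
    exact h
  set R : ℝ := ψ (a e) - ψ (b e) with hRdef
  have hlev : levOf a b r Lp e = R / r e := by
    unfold levOf
    rw [← hψdef, ← hwdef, hwdef, incv_dot, ← hRdef]
  -- quadratic form identity and bounds
  have hRquad : R = ∑ e', (r e')⁻¹ * (ψ (a e') - ψ (b e'))^2 := by
    have h2 : w ⬝ᵥ ψ = R := by rw [hwdef, incv_dot, hRdef]
    rw [← h2, ← hψ, lapM_quad]
  have hR0 : 0 ≤ R := by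
    rw [hRquad]
    refine Finset.sum_nonneg fun e' _ => ?_
    exact mul_nonneg (inv_nonneg.mpr (hr e').le) (sq_nonneg _)
  have hRr : R ≤ r e := by
    have hle : (r e)⁻¹ * R^2 ≤ R := by
      calc (r e)⁻¹ * R^2 = (r e)⁻¹ * (ψ (a e) - ψ (b e))^2 := by rw [← hRdef]
        _ ≤ ∑ e', (r e')⁻¹ * (ψ (a e') - ψ (b e'))^2 := by
            refine Finset.single_le_sum
              (f := fun e' => (r e')⁻¹ * (ψ (a e') - ψ (b e'))^2)
              (fun e' _ => mul_nonneg (inv_nonneg.mpr (hr e').le) (sq_nonneg _))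
              (Finset.mem_univ e)
        _ = R := hRquad.symm
    nlinarith [hr e, mul_pos (hr e) (hr e), mul_le_mul_of_nonneg_left hle (hr e).le,
      mul_inv_cancel₀ hre]
  -- series part
  have hLS_sym := lapM_transpose (seriesA a) (seriesB b e)
    (fun x => (seriesR r e x)⁻¹)
  have hser1 : levOf (seriesA a) (seriesB b e) (seriesR r e) LpS (Sum.inl e)
      = R / r e / 2 + 1/2 := by
    have hsol := series_solve a b r hr e ψ hψ' 1
    have htarget : (fun v => (1+1)/2 * incv (Sum.inl (a e)) (Sum.inr ()) v
        + (1-1)/2 * incv (Sum.inr ()) (Sum.inl (b e)) v)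
        = incv (Sum.inl (a e) : V ⊕ Unit) (Sum.inr ()) := by
      funext v; norm_num
    rw [htarget] at hsol
    have hq := quad_of_pinv _ LpS hLS_sym hLpS.1 _ _ hsol
    unfold levOf
    have hA : seriesA a (Sum.inl e) = Sum.inl (a e) := rfl
    have hB : seriesB b e (Sum.inl e) = Sum.inr () := by simp [seriesB]
    have hRr' : seriesR r e (Sum.inl e) = r e / 2 := by simp [seriesR]
    rw [hA, hB, hRr', hq, dot_incv]
    simp only [Sum.elim_inl, Sum.elim_inr]
    field_simp
    ring
  have hser2 : levOf (seriesA a) (seriesB b e) (seriesR r e) LpS (Sum.inr ())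
      = R / r e / 2 + 1/2 := by
    have hsol := series_solve a b r hr e ψ hψ' (-1)
    have htarget : (fun v => (-1+1)/2 * incv (Sum.inl (a e)) (Sum.inr ()) v
        + (1-(-1))/2 * incv (Sum.inr ()) (Sum.inl (b e)) v)
        = incv (Sum.inr () : V ⊕ Unit) (Sum.inl (b e)) := by
      funext v; norm_num
    rw [htarget] at hsol
    have hq := quad_of_pinv _ LpS hLS_sym hLpS.1 _ _ hsol
    unfold levOf
    have hA : seriesA a (Sum.inr ()) = Sum.inr () := rfl
    have hB : seriesB b e (Sum.inr ()) = Sum.inl (b e) := rfl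
    have hRr' : seriesR r e (Sum.inr ()) = r e / 2 := rfl
    rw [hA, hB, hRr', hq, dot_incv]
    simp only [Sum.elim_inl, Sum.elim_inr]
    field_simp
    ring
  -- parallel part
  have hLP : lapM (parA a e) (parB b e) (fun x => (parR r e x)⁻¹) = L :=
    lapM_par a b r hr e
  have hLpP1 : L * LpP * L = L := by rw [← hLP]; exact hLpP.1
  have hqP : w ⬝ᵥ LpP.mulVec w = ψ ⬝ᵥ w := quad_of_pinv L LpP hsym hLpP1 ψ w hψ
  have hψw : ψ ⬝ᵥ w = R := by rw [hwdef, dot_incv, hRdef]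
  have hpar1 : levOf (parA a e) (parB b e) (parR r e) LpP (Sum.inl e)
      = R / r e / 2 := by
    unfold levOf
    have hA : parA a e (Sum.inl e) = a e := rfl
    have hB : parB b e (Sum.inl e) = b e := rfl
    have hRr' : parR r e (Sum.inl e) = 2 * r e := by simp [parR]
    rw [hA, hB, hRr', ← hwdef, hqP, hψw, div_div, mul_comm]
  have hpar2 : levOf (parA a e) (parB b e) (parR r e) LpP (Sum.inr ())
      = R / r e / 2 := by
    unfold levOf
    have hA : parA a e (Sum.inr ()) = a e := rfl
    have hB : parB b e (Sum.inr ()) = b e := rfl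
    have hRr' : parR r e (Sum.inr ()) = 2 * r e := rfl
    rw [hA, hB, hRr', ← hwdef, hqP, hψw, div_div, mul_comm]
  have hlev0 : 0 ≤ levOf a b r Lp e := by
    rw [hlev]; exact div_nonneg hR0 (hr e).le
  have hlev1 : levOf a b r Lp e ≤ 1 := by
    rw [hlev, div_le_one (hr e)]; exact hRr
  refine ⟨fun hhalf => ⟨?_, ?_, ?_⟩, fun hhalf => ⟨?_, ?_, ?_⟩⟩
  · rw [hser1, hlev]
  · rw [hser2, hlev]
  · constructor <;> [linarith; linarith]
  · rw [hpar1, hlev]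
  · rw [hpar2, hlev]
  · constructor <;> [linarith; linarith]
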